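/- (Weak Chen–Chow) If w, v ∈ ℝ⟨1,…,d⟩ satisfy ⟨S(X), w⟩ = ⟨S(X), v⟩ for all piecewise linear paths X in ℝᵈ, then w = v. Equivalently, the signatures of piecewise linear paths span the full linear dual of the space of words of length ≤ k, for every k. -/

import Mathlib

open MeasureTheory Set

noncomputable section

/-- Iterated-integral signature of a path `X` (restricted to `[0,1]`) at a word:
`∫_{0 ≤ t₁ ≤ ⋯ ≤ t_k ≤ 1} X'_{i₁}(t₁) ⋯ X'_{i_k}(t_k) dt`. -/
def sig {d : ℕ} (X : ℝ → Fin d → ℝ) (w : List (Fin d)) : ℝ :=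
  ∫ t in {t : Fin w.length → ℝ | (∀ i, t i ∈ Set.Icc (0:ℝ) 1) ∧ Monotone t},
    ∏ i : Fin w.length, deriv (fun s => X s (w.get i)) (t i)

/-- The piecewise linear path with control points `x 0 → x 1 → ⋯ → x n`,
parametrized uniformly on `[0,1]`. -/
def pwl {d n : ℕ} (x : Fin (n + 1) → Fin d → ℝ) (t : ℝ) : Fin d → ℝ := fun j =>
  if t ≤ 0 then x 0 j
  else if 1 ≤ t then x (Fin.last n) j
  else
    let i : ℕ := ⌊t * (n : ℝ)⌋.toNat
    x ⟨min i n, Nat.lt_succ_of_le (min_le_right _ _)⟩ j +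
      (t * (n : ℝ) - (i : ℝ)) *
        (x ⟨min (i + 1) n, Nat.lt_succ_of_le (min_le_right _ _)⟩ j -
          x ⟨min i n, Nat.lt_succ_of_le (min_le_right _ _)⟩ j)

/-- The free associative algebra `ℝ⟨1,…,d⟩` with words as basis. -/
abbrev FreeTensor (d : ℕ) := MonoidAlgebra ℝ (FreeMonoid (Fin d))

/-- Pairing `⟨S(X), p⟩` of the signature of a path with an element of `ℝ⟨1,…,d⟩`. -/
noncomputable def sigPair {d : ℕ} (X : ℝ → Fin d → ℝ) (p : FreeTensor d) : ℝ :=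
  p.coeff.sum fun w c => c * sig X (FreeMonoid.toList w)

/-- Shuffle product of two words, as an element of `ℝ⟨1,…,d⟩`. -/
noncomputable def shW {d : ℕ} : List (Fin d) → List (Fin d) → FreeTensor d
  | [], v => MonoidAlgebra.ofCoeff (Finsupp.single (FreeMonoid.ofList v) 1)
  | a :: u, [] => MonoidAlgebra.ofCoeff (Finsupp.single (FreeMonoid.ofList (a :: u)) 1)
  | a :: u, b :: v =>
      MonoidAlgebra.ofCoeff (Finsupp.mapDomain (fun m => FreeMonoid.of a * m) (shW u (b :: v)).coeff) +
        MonoidAlgebra.ofCoeff (Finsupp.mapDomain (fun m => FreeMonoid.of b * m) (shW (a :: u) v).coeff)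
  termination_by u v => u.length + v.length

/-- The shuffle product `⧢` on `ℝ⟨1,…,d⟩`, extended bilinearly from words. -/
noncomputable def shuffle {d : ℕ} (p q : FreeTensor d) : FreeTensor d :=
  p.coeff.sum fun u a => q.coeff.sum fun v b => (a * b) • shW (FreeMonoid.toList u) (FreeMonoid.toList v)

/-- The antipode, sending a word of length `k` to `(−1)^k` times its reversal. -/
noncomputable def antipode {d : ℕ} (p : FreeTensor d) : FreeTensor d :=
  p.coeff.sum fun w c =>
    MonoidAlgebra.ofCoeff (Finsupp.single (FreeMonoid.ofList (FreeMonoid.toList w).reverse)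
      ((-1 : ℝ) ^ (FreeMonoid.toList w).length * c))

/-- The signed-volume element `vol_d = Σ_{σ ∈ S_d} sgn(σ) σ(1)⋯σ(d)`. -/
noncomputable def volElt (d : ℕ) : FreeTensor d :=
  ∑ σ : Equiv.Perm (Fin d),
    ((Equiv.Perm.sign σ : ℤ) : ℝ) •
      MonoidAlgebra.ofCoeff (Finsupp.single (FreeMonoid.ofList (List.ofFn fun i => σ i)) (1 : ℝ))

lemma pwl_eq_affine {d n : ℕ} (x : Fin (n + 1) → Fin d → ℝ) (j : Fin d) (m : ℕ) (hm : m < n)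
    {r : ℝ} (hr : r ∈ Set.Ioo ((m : ℝ) / n) ((m + 1 : ℝ) / n)) :
    pwl x r j = x ⟨m, by omega⟩ j + (r * n - m) * (x ⟨m + 1, by omega⟩ j - x ⟨m, by omega⟩ j) := by
  have hn : (0:ℝ) < n := by
    have : (0:ℕ) < n := by omega
    exact_mod_cast this
  obtain ⟨hr1, hr2⟩ := hr
  have hm0 : (0:ℝ) ≤ (m:ℝ) / n := by positivity
  have h0 : 0 < r := lt_of_le_of_lt hm0 hr1
  have h1 : r < 1 := by
    have hle : ((m:ℝ) + 1) / n ≤ 1 := by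
      rw [div_le_one hn]
      have : (m + 1 : ℕ) ≤ n := hm
      exact_mod_cast this
    exact lt_of_lt_of_le hr2 hle
  have hfl : ⌊r * (n:ℝ)⌋ = (m : ℤ) := by
    rw [Int.floor_eq_iff]
    constructor
    · push_cast
      exact le_of_lt ((div_lt_iff₀ hn).mp hr1)
    · push_cast
      exact (lt_div_iff₀ hn).mp hr2
  simp only [pwl, if_neg (not_le.mpr h0), if_neg (not_le.mpr h1), hfl, Int.toNat_natCast,
    min_eq_left (le_of_lt hm), min_eq_left (by omega : m + 1 ≤ n)]

lemma pwl_deriv {d n : ℕ} (x : Fin (n + 1) → Fin d → ℝ) (j : Fin d) (m : ℕ) (hm : m < n)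
    {t : ℝ} (ht : t ∈ Set.Ioo ((m : ℝ) / n) ((m + 1 : ℝ) / n)) :
    deriv (fun r => pwl x r j) t = n * (x ⟨m + 1, by omega⟩ j - x ⟨m, by omega⟩ j) := by
  have heq : (fun r => pwl x r j) =ᶠ[nhds t] fun r =>
      x ⟨m, by omega⟩ j + (r * n - m) * (x ⟨m + 1, by omega⟩ j - x ⟨m, by omega⟩ j) := by
    filter_upwards [Ioo_mem_nhds ht.1 ht.2] with r hr
    exact pwl_eq_affine x j m hm hr
  rw [heq.deriv_eq]
  have hder : HasDerivAt (fun r : ℝ =>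
      x ⟨m, by omega⟩ j + (r * n - m) * (x ⟨m + 1, by omega⟩ j - x ⟨m, by omega⟩ j))
      (1 * (n:ℝ) * (x ⟨m + 1, by omega⟩ j - x ⟨m, by omega⟩ j)) t :=
    ((((hasDerivAt_id t).mul_const (n:ℝ)).sub_const (m:ℝ)).mul_const _).const_add _
  rw [hder.deriv]
  ring

def ctrl {d k : ℕ} (c : Fin k → Fin d) (a : Fin k → ℝ) (m : Fin (k + 1)) (j : Fin d) : ℝ :=
  ∑ i : Fin k, if (i : ℕ) < (m : ℕ) ∧ c i = j then a i else 0

lemma ctrl_sub {d k : ℕ} (c : Fin k → Fin d) (a : Fin k → ℝ) (j : Fin d) (m : ℕ) (hm : m < k) :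
    ctrl c a ⟨m + 1, by omega⟩ j - ctrl c a ⟨m, by omega⟩ j =
      if c ⟨m, hm⟩ = j then a ⟨m, hm⟩ else 0 := by
  rw [ctrl, ctrl, ← Finset.sum_sub_distrib]
  simp only [Fin.val_mk]
  rw [Finset.sum_eq_single_of_mem (⟨m, hm⟩ : Fin k) (Finset.mem_univ _)]
  · by_cases h : c ⟨m, hm⟩ = j
    · simp [h]
    · simp [h]
  · intro i _ hi
    have hiv : (i : ℕ) ≠ m := fun h => hi (Fin.ext h)
    by_cases h1 : (i : ℕ) < m ∧ c i = j
    · rw [if_pos ⟨by omega, h1.2⟩, if_pos h1, sub_self]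
    · have h2 : ¬((i : ℕ) < m + 1 ∧ c i = j) := by
        intro h; exact h1 ⟨by omega, h.2⟩
      rw [if_neg h2, if_neg h1, sub_self]

def Tset (k' : ℕ) : Set (Fin k' → ℝ) := {t | (∀ i, t i ∈ Set.Icc (0:ℝ) 1) ∧ Monotone t}

def Box {k' : ℕ} (k : ℕ) (φ : Fin k' → Fin k) : Set (Fin k' → ℝ) :=
  Set.pi Set.univ fun i => Set.Ioo (((φ i : ℕ) : ℝ) / k) ((((φ i : ℕ) : ℝ) + 1) / k)

lemma measurableSet_Tset (k' : ℕ) : MeasurableSet (Tset k') := by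
  have : Tset k' = (Set.pi Set.univ fun _ => Set.Icc (0:ℝ) 1) ∩
      ⋂ (i : Fin k') (j : Fin k') (_ : i ≤ j), {t | t i ≤ t j} := by
    ext t
    simp only [Tset, Set.mem_setOf_eq, Set.mem_inter_iff, Set.mem_pi, Set.mem_univ,
      forall_true_left, Set.mem_iInter, Monotone]
  rw [this]
  exact (MeasurableSet.univ_pi fun _ => measurableSet_Icc).inter
    (MeasurableSet.iInter fun i => MeasurableSet.iInter fun j => MeasurableSet.iInter fun _ =>
      measurableSet_le (measurable_pi_apply i) (measurable_pi_apply j))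

lemma measurableSet_Box {k' k : ℕ} (φ : Fin k' → Fin k) : MeasurableSet (Box k φ) :=
  MeasurableSet.univ_pi fun _ => measurableSet_Ioo

lemma box_disjoint {k' k : ℕ} (hk : 0 < k) {φ ψ : Fin k' → Fin k} (hne : φ ≠ ψ) :
    Disjoint (Box k φ) (Box k ψ) := by
  obtain ⟨i, hi⟩ := Function.ne_iff.mp hne
  have hk' : (0:ℝ) < k := by exact_mod_cast hk
  rw [Set.disjoint_left]
  intro t ht1 ht2
  have h1 := ht1 i (Set.mem_univ i)
  have h2 := ht2 i (Set.mem_univ i)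
  rcases lt_or_gt_of_ne (fun h : (φ i : ℕ) = (ψ i : ℕ) => hi (Fin.ext h)) with hlt | hlt
  · have hc : ((φ i : ℕ) : ℝ) + 1 ≤ ((ψ i : ℕ) : ℝ) := by exact_mod_cast hlt
    have : (((φ i : ℕ) : ℝ) + 1) / k ≤ ((ψ i : ℕ) : ℝ) / k := by gcongr
    exact absurd (h1.2.trans_le (this.trans (le_of_lt h2.1))) (lt_irrefl _)
  · have hc : ((ψ i : ℕ) : ℝ) + 1 ≤ ((φ i : ℕ) : ℝ) := by exact_mod_cast hlt
    have : (((ψ i : ℕ) : ℝ) + 1) / k ≤ ((φ i : ℕ) : ℝ) / k := by gcongr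
    exact absurd (h2.2.trans_le (this.trans (le_of_lt h1.1))) (lt_irrefl _)

lemma volume_box {k' k : ℕ} (hk : 0 < k) (φ : Fin k' → Fin k) :
    volume (Box k φ) = ENNReal.ofReal ((1:ℝ)/k) ^ k' := by
  rw [Box, volume_pi_pi]
  have : ∀ i : Fin k', volume (Set.Ioo (((φ i : ℕ) : ℝ) / k) ((((φ i : ℕ) : ℝ) + 1) / k)) =
      ENNReal.ofReal ((1:ℝ)/k) := by
    intro i
    rw [Real.volume_Ioo, div_sub_div_same]
    ring_nf
  rw [Finset.prod_congr rfl fun i _ => this i, Finset.prod_const, Finset.card_univ,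
    Fintype.card_fin]

lemma Tset_ae_eq {k' k : ℕ} (hk : 0 < k) :
    Tset k' =ᵐ[volume] ⋃ φ : Fin k' → Fin k, (Tset k' ∩ Box k φ) := by
  have hk' : (0:ℝ) < k := by exact_mod_cast hk
  set N : Set (Fin k' → ℝ) :=
    ⋃ (i : Fin k') (m : ℕ) (_ : m ≤ k), {t : Fin k' → ℝ | t i = (m : ℝ) / k} with hN
  have hnull : volume N = 0 := by
    refine measure_iUnion_null fun i => measure_iUnion_null fun m => measure_iUnion_null fun _ => ?_
    rw [volume_pi]
    exact Measure.pi_hyperplane _ i _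
  rw [MeasureTheory.ae_eq_set]
  constructor
  · refine measure_mono_null ?_ hnull
    rintro t ⟨htT, htU⟩
    by_contra htN
    apply htU
    have key : ∀ i : Fin k', ∃ m : Fin k,
        t i ∈ Set.Ioo (((m : ℕ) : ℝ) / k) ((((m : ℕ) : ℝ) + 1) / k) := by
      intro i
      have h01 := htT.1 i
      have hnb : ∀ m : ℕ, m ≤ k → t i ≠ (m:ℝ)/k := by
        intro m hm hEq
        exact htN (Set.mem_iUnion.mpr ⟨i, Set.mem_iUnion.mpr ⟨m,
          Set.mem_iUnion.mpr ⟨hm, hEq⟩⟩⟩)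
      have h0 : 0 < t i := lt_of_le_of_ne h01.1 (by
        intro hEq
        exact hnb 0 (Nat.zero_le k) (by rw [← hEq]; simp))
      have h1 : t i < 1 := lt_of_le_of_ne h01.2 (by
        intro hEq
        exact hnb k le_rfl (by rw [hEq, div_self hk'.ne']))
      set m0 : ℕ := ⌊t i * k⌋.toNat with hm0
      have hge : (0:ℝ) ≤ t i * k := by positivity
      have hfl : ((m0 : ℤ) : ℝ) = (⌊t i * k⌋ : ℝ) := by
        norm_cast
        exact Int.toNat_of_nonneg (Int.floor_nonneg.mpr hge)
      have hlow : (m0 : ℝ) ≤ t i * k := by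
        rw [show ((m0:ℕ):ℝ) = ((m0:ℤ):ℝ) by norm_cast, hfl]
        exact Int.floor_le _
      have hhigh : t i * k < (m0 : ℝ) + 1 := by
        rw [show ((m0:ℕ):ℝ) = ((m0:ℤ):ℝ) by norm_cast, hfl]
        exact Int.lt_floor_add_one _
      have hm0k : m0 < k := by
        have : t i * k < k := by nlinarith
        have : (m0 : ℝ) < k := lt_of_le_of_lt hlow this
        exact_mod_cast this
      have hstrict : (m0 : ℝ) < t i * k := by
        rcases lt_or_eq_of_le hlow with h | h
        · exact h
        · exfalso
          exact hnb m0 (le_of_lt hm0k) (by rw [eq_div_iff hk'.ne', ← h])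
      exact ⟨⟨m0, hm0k⟩, by rw [div_lt_iff₀ hk']; exact hstrict,
        by rw [lt_div_iff₀ hk']; exact hhigh⟩
    choose φ hφ using key
    exact Set.mem_iUnion.mpr ⟨φ, htT, fun i _ => hφ i⟩
  · have hsub : (⋃ φ : Fin k' → Fin k, (Tset k' ∩ Box k φ)) ⊆ Tset k' :=
      Set.iUnion_subset fun φ => Set.inter_subset_left
    rw [Set.diff_eq_empty.mpr hsub]
    exact measure_empty

lemma sig_pwl_ctrl {d k : ℕ} (hk : 0 < k) (c : Fin k → Fin d) (a : Fin k → ℝ)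
    (w : List (Fin d)) :
    sig (pwl (ctrl c a)) w = ∑ φ : Fin w.length → Fin k,
      (volume (Tset w.length ∩ Box k φ)).toReal *
        ∏ i : Fin w.length, ((k : ℝ) * (if c (φ i) = w.get i then a (φ i) else 0)) := by
  have hk' : (0:ℝ) < k := by exact_mod_cast hk
  set k' := w.length
  set f : (Fin k' → ℝ) → ℝ :=
    fun t => ∏ i : Fin k', deriv (fun r => pwl (ctrl c a) r (w.get i)) (t i) with hf
  set κ : (Fin k' → Fin k) → ℝ :=
    fun φ => ∏ i : Fin k', ((k : ℝ) * (if c (φ i) = w.get i then a (φ i) else 0)) with hκ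
  have hSmeas : ∀ φ : Fin k' → Fin k, MeasurableSet (Tset k' ∩ Box k φ) :=
    fun φ => (measurableSet_Tset k').inter (measurableSet_Box φ)
  have heqOn : ∀ φ : Fin k' → Fin k, Set.EqOn f (fun _ => κ φ) (Tset k' ∩ Box k φ) := by
    intro φ t ht
    simp only [hf, hκ]
    refine Finset.prod_congr rfl fun i _ => ?_
    have hti := ht.2 i (Set.mem_univ i)
    have hd := pwl_deriv (ctrl c a) (w.get i) (φ i : ℕ) (φ i).isLt hti
    rw [hd, ctrl_sub c a (w.get i) (φ i : ℕ) (φ i).isLt]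
  have hvolfin : ∀ φ : Fin k' → Fin k, volume (Tset k' ∩ Box k φ) < ⊤ := by
    intro φ
    refine lt_of_le_of_lt (measure_mono Set.inter_subset_right) ?_
    rw [volume_box hk φ]
    exact ENNReal.pow_lt_top ENNReal.ofReal_lt_top
  have hInt : ∀ φ : Fin k' → Fin k, IntegrableOn f (Tset k' ∩ Box k φ) := by
    intro φ
    exact (integrableOn_const (hvolfin φ).ne).congr_fun (heqOn φ).symm (hSmeas φ)
  have hdisj : Pairwise (Function.onFun Disjoint fun φ : Fin k' → Fin k =>
      Tset k' ∩ Box k φ) := fun φ ψ hne =>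
    Disjoint.mono Set.inter_subset_right Set.inter_subset_right (box_disjoint hk hne)
  have step1 : sig (pwl (ctrl c a)) w = ∫ t in ⋃ φ : Fin k' → Fin k, (Tset k' ∩ Box k φ), f t :=
    setIntegral_congr_set (Tset_ae_eq hk)
  rw [step1, integral_iUnion hSmeas hdisj (integrableOn_finite_iUnion.mpr hInt), tsum_fintype]
  refine Finset.sum_congr rfl fun φ _ => ?_
  rw [setIntegral_congr_fun (hSmeas φ) (heqOn φ), setIntegral_const]
  simp only [smul_eq_mul, hκ, measureReal_def]
  rfl

lemma sum_ie {k k' : ℕ} (φ : Fin k' → Fin k) :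
    ∑ A : Finset (Fin k), (-1:ℝ)^(k - A.card) * (if ∀ i, φ i ∈ A then 1 else 0)
      = if Function.Surjective φ then 1 else 0 := by
  classical
  set R : Finset (Fin k) := Finset.image φ Finset.univ with hR
  have h1 : ∀ A : Finset (Fin k), (∀ i, φ i ∈ A) ↔ R ⊆ A := by
    intro A
    rw [hR, Finset.image_subset_iff]
    simp
  have h2 : ∑ A : Finset (Fin k), (-1:ℝ)^(k - A.card) * (if ∀ i, φ i ∈ A then 1 else 0)
      = ∑ A ∈ Finset.univ.filter (fun A : Finset (Fin k) => R ⊆ A), (-1:ℝ)^(k - A.card) := by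
    rw [Finset.sum_filter]
    refine Finset.sum_congr rfl fun A _ => ?_
    by_cases hc : R ⊆ A
    · rw [if_pos hc, if_pos ((h1 A).mpr hc), mul_one]
    · rw [if_neg hc, if_neg (fun h => hc ((h1 A).mp h)), mul_zero]
  rw [h2]
  have h3 : ∑ A ∈ Finset.univ.filter (fun A : Finset (Fin k) => R ⊆ A), (-1:ℝ)^(k - A.card)
      = ∑ B ∈ Rᶜ.powerset, (-1:ℝ)^(k - (R.card + B.card)) := by
    refine Finset.sum_nbij' (fun A => A \ R) (fun B => R ∪ B) ?_ ?_ ?_ ?_ ?_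
    · intro A hA
      rw [Finset.mem_filter] at hA
      rw [Finset.mem_powerset]
      intro x hx
      rw [Finset.mem_sdiff] at hx
      simp [hx.2]
    · intro B hB
      simp
    · intro A hA
      rw [Finset.mem_filter] at hA
      exact Finset.union_sdiff_of_subset hA.2
    · intro B hB
      rw [Finset.mem_powerset] at hB
      apply Finset.union_sdiff_cancel_left
      rw [Finset.disjoint_left]
      intro x hx1 hx2
      exact absurd hx1 (by simpa using hB hx2)
    · intro A hA
      rw [Finset.mem_filter] at hA
      have hc := Finset.card_sdiff_add_card_eq_card hA.2
      show (-1:ℝ)^(k - A.card) = (-1:ℝ)^(k - (R.card + (A \ R).card))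
      congr 1
      omega
  rw [h3]
  have hm : Rᶜ.card = k - R.card := by
    rw [Finset.card_compl, Fintype.card_fin]
  have h4 : ∀ B ∈ Rᶜ.powerset, (-1:ℝ)^(k - (R.card + B.card))
      = (-1:ℝ)^(Rᶜ.card) * (-1:ℝ)^(B.card) := by
    intro B hB
    rw [Finset.mem_powerset] at hB
    have hb : B.card ≤ Rᶜ.card := Finset.card_le_card hB
    have hRk : R.card ≤ k := by
      have := Finset.card_le_card (Finset.subset_univ R)
      simpa using this
    rw [← pow_add, neg_one_pow_eq_pow_mod_two, neg_one_pow_eq_pow_mod_two (n := Rᶜ.card + B.card)]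
    congr 1
    omega
  rw [Finset.sum_congr rfl h4, ← Finset.mul_sum]
  have h5 : ∑ B ∈ Rᶜ.powerset, (-1:ℝ)^(B.card) = if Rᶜ = ∅ then 1 else 0 := by
    have := Finset.sum_powerset_neg_one_pow_card (x := Rᶜ)
    have h := congrArg (Int.cast : ℤ → ℝ) this
    push_cast at h
    exact h
  rw [h5]
  have h6 : (Rᶜ = ∅) ↔ Function.Surjective φ := by
    rw [Finset.compl_eq_empty_iff]
    constructor
    · intro hRu b
      have : b ∈ R := hRu ▸ Finset.mem_univ b
      rw [hR, Finset.mem_image] at this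
      obtain ⟨a, _, ha⟩ := this
      exact ⟨a, ha⟩
    · intro hs
      apply Finset.eq_univ_of_forall
      intro b
      obtain ⟨a, ha⟩ := hs b
      exact Finset.mem_image.mpr ⟨a, Finset.mem_univ a, ha⟩
  by_cases hs : Function.Surjective φ
  · rw [if_pos hs, if_pos (h6.mpr hs), h6.mpr hs]
    simp
  · rw [if_neg hs, if_neg (fun h => hs (h6.mp h)), mul_zero]

lemma fin_strictMono_le {a b : ℕ} {ψ : Fin a → Fin b} (h : StrictMono ψ) (i : Fin a) :
    (i : ℕ) ≤ (ψ i : ℕ) := by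
  have himg : Finset.image ψ (Finset.Iic i) ⊆ Finset.Iic (ψ i) := by
    intro x hx
    rw [Finset.mem_image] at hx
    obtain ⟨j, hj, rfl⟩ := hx
    rw [Finset.mem_Iic] at hj ⊢
    exact h.monotone hj
  have hcard := Finset.card_le_card himg
  rw [Finset.card_image_of_injective _ h.injective, Fin.card_Iic, Fin.card_Iic] at hcard
  omega

lemma fin_strictMono_surj_eq {a b : ℕ} {φ : Fin a → Fin b} (h1 : StrictMono φ)
    (h2 : Function.Surjective φ) (i : Fin a) : (φ i : ℕ) = (i : ℕ) := by
  have hle := fin_strictMono_le h1 i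
  have h2' := fin_strictMono_le (h1.orderIsoOfSurjective φ h2).symm.strictMono (φ i)
  rw [StrictMono.orderIsoOfSurjective_symm_apply_self] at h2'
  omega

lemma Tbox_empty {k' k : ℕ} (hk : 0 < k) {φ : Fin k' → Fin k} {i j : Fin k'} (hij : i < j)
    (hlt : (φ j : ℕ) < (φ i : ℕ)) : Tset k' ∩ Box k φ = ∅ := by
  have hk' : (0:ℝ) < k := by exact_mod_cast hk
  ext t
  simp only [Set.mem_inter_iff, Set.mem_empty_iff_false, iff_false, not_and]
  intro htT htB
  have h1 := htB i (Set.mem_univ i)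
  have h2 := htB j (Set.mem_univ j)
  have hc : ((φ j : ℕ) : ℝ) + 1 ≤ ((φ i : ℕ) : ℝ) := by exact_mod_cast hlt
  have hd : (((φ j : ℕ) : ℝ) + 1) / k ≤ ((φ i : ℕ) : ℝ) / k := by gcongr
  have := htT.2 (le_of_lt hij)
  linarith [h1.1, h2.2]

lemma Box_subset_Tset {k' k : ℕ} (hk : 0 < k) (hkk : k' = k) {φ : Fin k' → Fin k}
    (hv : ∀ i, (φ i : ℕ) = (i : ℕ)) : Box k φ ⊆ Tset k' := by
  have hk' : (0:ℝ) < k := by exact_mod_cast hk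
  intro t ht
  constructor
  · intro i
    have h := ht i (Set.mem_univ i)
    simp only [hv i] at h
    constructor
    · have : (0:ℝ) ≤ ((i:ℕ):ℝ) / k := by positivity
      linarith [h.1]
    · have hik : ((i:ℕ):ℝ) + 1 ≤ k := by
        have : (i:ℕ) + 1 ≤ k := by omega
        exact_mod_cast this
      have : (((i:ℕ):ℝ) + 1) / k ≤ 1 := by
        rw [div_le_one hk']
        exact hik
      linarith [h.2]
  · intro i j hij
    rcases eq_or_lt_of_le hij with heq | hlt
    · rw [heq]
    · have h1 := ht i (Set.mem_univ i)
      have h2 := ht j (Set.mem_univ j)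
      simp only [hv i] at h1
      simp only [hv j] at h2
      have hij' : (i:ℕ) + 1 ≤ (j:ℕ) := hlt
      have hc : ((i:ℕ):ℝ) + 1 ≤ ((j:ℕ):ℝ) := by exact_mod_cast hij'
      have hd : (((i:ℕ):ℝ) + 1) / k ≤ ((j:ℕ):ℝ) / k := by gcongr
      linarith [h1.2, h2.1]

lemma sig_nil {d : ℕ} (X : ℝ → Fin d → ℝ) : sig X [] = 1 := by
  rw [sig]
  have hset : {t : Fin ([] : List (Fin d)).length → ℝ |
      (∀ i, t i ∈ Set.Icc (0:ℝ) 1) ∧ Monotone t} = Set.univ := by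
    ext t
    simp only [Set.mem_setOf_eq, Set.mem_univ, iff_true]
    exact ⟨fun i => i.elim0, fun i => i.elim0⟩
  rw [hset]
  simp only [List.length_nil, Finset.univ_eq_empty, Finset.prod_empty]
  rw [setIntegral_const]
  simp [volume_pi, MeasureTheory.Measure.pi_univ, measureReal_def]

lemma surj_phi {k' k : ℕ} (hk : 0 < k) (hk'le : k' ≤ k) {φ : Fin k' → Fin k}
    (hs : Function.Surjective φ) :
    Tset k' ∩ Box k φ = ∅ ∨ (k' = k ∧ ∀ i, (φ i : ℕ) = (i : ℕ)) := by
  have hcard : k ≤ k' := by simpa using Fintype.card_le_of_surjective φ hs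
  have hkk : k' = k := le_antisymm hk'le hcard
  by_cases hinv : ∃ i j : Fin k', i < j ∧ (φ j : ℕ) < (φ i : ℕ)
  · obtain ⟨i, j, hij, hlt⟩ := hinv
    exact Or.inl (Tbox_empty hk hij hlt)
  · right
    refine ⟨hkk, ?_⟩
    have hmono : Monotone φ := by
      intro i j hij
      rcases eq_or_lt_of_le hij with rfl | hlt
      · exact le_rfl
      · by_contra hcon
        push_neg at hcon
        exact hinv ⟨i, j, hlt, hcon⟩
    have hbij : Function.Bijective φ :=
      (Fintype.bijective_iff_surjective_and_card φ).mpr ⟨hs, by simp [hkk]⟩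
    exact fin_strictMono_surj_eq (hmono.strictMono_of_injective hbij.1) hs

lemma key_term {d k : ℕ} (hk : 0 < k) (U L : List (Fin d)) (hU : U.length = k) (hL : L.length ≤ k)
    (c : Fin k → Fin d) (hc : ∀ i : Fin k, c i = U.get (Fin.cast hU.symm i)) :
    ∑ φ : Fin L.length → Fin k,
      ((volume (Tset L.length ∩ Box k φ)).toReal *
        ∏ i : Fin L.length, ((k:ℝ) * if c (φ i) = L.get i then 1 else 0)) *
      (if Function.Surjective φ then 1 else 0)
    = if L = U then 1 else 0 := by
  classical
  have hk' : (0:ℝ) < k := by exact_mod_cast hk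
  have hterm : ∀ φ : Fin L.length → Fin k,
      ((volume (Tset L.length ∩ Box k φ)).toReal *
        ∏ i : Fin L.length, ((k:ℝ) * if c (φ i) = L.get i then 1 else 0)) *
      (if Function.Surjective φ then 1 else 0)
      = if (L = U ∧ ∀ i : Fin L.length, (φ i : ℕ) = (i : ℕ)) then 1 else 0 := by
    intro φ
    by_cases hcond : L = U ∧ ∀ i : Fin L.length, (φ i : ℕ) = (i : ℕ)
    · obtain ⟨hLU, hv⟩ := hcond
      have hLk : L.length = k := by rw [hLU, hU]
      have hsurj : Function.Surjective φ := by
        intro b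
        refine ⟨⟨(b : ℕ), by omega⟩, ?_⟩
        exact Fin.ext (hv ⟨(b : ℕ), by omega⟩)
      have hvol : Tset L.length ∩ Box k φ = Box k φ :=
        Set.inter_eq_self_of_subset_right (Box_subset_Tset hk hLk hv)
      rw [if_pos hsurj, mul_one,
        if_pos (show L = U ∧ ∀ i : Fin L.length, (φ i : ℕ) = (i : ℕ) from ⟨hLU, hv⟩),
        hvol, volume_box hk φ]
      have hmatch : ∀ i : Fin L.length, c (φ i) = L.get i := by
        intro i
        rw [hc (φ i)]
        have hvv : ((Fin.cast hU.symm (φ i)) : ℕ) = (i : ℕ) := hv i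
        -- U.get (cast (φ i)) = L.get i; use hLU to rewrite L
        subst hLU
        congr 1
        exact Fin.ext hvv
      rw [Finset.prod_congr rfl fun i _ => by rw [if_pos (hmatch i), mul_one]]
      rw [Finset.prod_const, Finset.card_univ, Fintype.card_fin]
      rw [ENNReal.toReal_pow, ENNReal.toReal_ofReal (by positivity)]
      rw [← mul_pow, one_div_mul_cancel hk'.ne', one_pow]
    · rw [if_neg hcond]
      by_cases hsurj : Function.Surjective φ
      · rcases surj_phi hk hL hsurj with hempty | ⟨hkk, hv⟩
        · rw [hempty]
          simp
        · -- L ≠ U forced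
          have hLU : L ≠ U := fun hLU => hcond ⟨hLU, hv⟩
          have hne : ∃ i : Fin L.length, c (φ i) ≠ L.get i := by
            by_contra hall
            push_neg at hall
            apply hLU
            apply List.ext_get (by omega)
            intro n h1 h2
            have := hall ⟨n, h1⟩
            rw [hc] at this
            rw [← this]
            congr 1
            exact Fin.ext (by simpa using hv ⟨n, h1⟩)
          obtain ⟨i, hi⟩ := hne
          rw [Finset.prod_eq_zero (Finset.mem_univ i) (by rw [if_neg hi, mul_zero])]
          simp
      · rw [if_neg hsurj, mul_zero]
  rw [Finset.sum_congr rfl fun φ _ => hterm φ]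
  by_cases hLU : L = U
  · subst hLU
    have hLk : L.length = k := hU
    set φ₀ : Fin L.length → Fin k := fun i => ⟨(i : ℕ), by omega⟩ with hφ₀
    have hiff : ∀ φ : Fin L.length → Fin k,
        ((L = L ∧ ∀ i : Fin L.length, (φ i : ℕ) = (i : ℕ))) ↔ φ = φ₀ := by
      intro φ
      constructor
      · rintro ⟨-, hv⟩
        funext i
        exact Fin.ext (hv i)
      · rintro rfl
        exact ⟨rfl, fun i => rfl⟩
    rw [Finset.sum_congr rfl fun φ _ => by rw [if_congr (hiff φ) rfl rfl]]
    rw [Finset.sum_ite_eq' Finset.univ φ₀ (fun _ => (1:ℝ))]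
    simp
  · rw [if_neg hLU]
    refine Finset.sum_eq_zero fun φ _ => ?_
    rw [if_neg (fun hcon => hLU hcon.1)]

/-- weak Chen–Chow: if `w, v ∈ ℝ⟨1,…,d⟩` have equal pairing with the
signature of every piecewise linear path, then `w = v`. -/
theorem weak_chen_chow {d : ℕ} (w v : FreeTensor d)
    (h : ∀ (n : ℕ) (x : Fin (n + 1) → Fin d → ℝ), sigPair (pwl x) w = sigPair (pwl x) v) :
    w = v := by
  classical
  by_contra hne
  set p : FreeTensor d := w - v with hp
  have hp0 : p ≠ 0 := sub_ne_zero.mpr hne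
  have h0 : ∀ (n : ℕ) (x : Fin (n + 1) → Fin d → ℝ), sigPair (pwl x) p = 0 := by
    intro n x
    have hsub : sigPair (pwl x) p = sigPair (pwl x) w - sigPair (pwl x) v :=
      by rw [sigPair, sigPair, sigPair, hp, MonoidAlgebra.coeff_sub]
         exact Finsupp.sum_sub_index (fun a b₁ b₂ => sub_mul b₁ b₂ _)
    rw [hsub, h n x, sub_self]
  have hsupp : p.coeff.support.Nonempty := Finsupp.support_nonempty_iff.mpr (mt MonoidAlgebra.coeff_eq_zero.mp hp0)
  obtain ⟨u, hu_mem, hu_sup⟩ :=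
    Finset.exists_mem_eq_sup p.coeff.support hsupp (fun m => (FreeMonoid.toList m).length)
  set k := p.coeff.support.sup (fun m => (FreeMonoid.toList m).length) with hkdef
  have hbound : ∀ m ∈ p.coeff.support, (FreeMonoid.toList m).length ≤ k :=
    fun m hm => Finset.le_sup hm
  rcases Nat.eq_zero_or_pos k with hk0 | hkpos
  · -- degenerate case : all words in the support are empty
    have hsupp1 : ∀ m ∈ p.coeff.support, m = 1 := by
      intro m hm
      have hlen := hbound m hm
      rw [hk0] at hlen
      have hnil : FreeMonoid.toList m = [] := List.length_eq_zero_iff.mp (Nat.le_zero.mp hlen)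
      have := congrArg FreeMonoid.ofList hnil
      rwa [FreeMonoid.ofList_toList] at this
    have hset : p.coeff.support = {1} :=
      Finset.eq_singleton_iff_nonempty_unique_mem.mpr ⟨hsupp, hsupp1⟩
    have h1mem : (1 : FreeMonoid (Fin d)) ∈ p.coeff.support := by rw [hset]; exact Finset.mem_singleton_self 1
    have hval := h0 0 (fun _ _ => 0)
    rw [sigPair, Finsupp.sum, hset, Finset.sum_singleton, FreeMonoid.toList_one, sig_nil,
      mul_one] at hval
    exact (Finsupp.mem_support_iff.mp h1mem) hval
  · have hu_len : (FreeMonoid.toList u).length = k := hu_sup.symm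
    set c : Fin k → Fin d := fun i => (FreeMonoid.toList u).get (Fin.cast hu_len.symm i) with hcdef
    have hc : ∀ i : Fin k, c i = (FreeMonoid.toList u).get (Fin.cast hu_len.symm i) :=
      fun i => rfl
    have hG : ∑ A : Finset (Fin k), (-1:ℝ)^(k - A.card) *
        sigPair (pwl (ctrl c (fun i => if i ∈ A then (1:ℝ) else 0))) p = 0 := by
      refine Finset.sum_eq_zero fun A _ => ?_
      rw [h0 k (ctrl c _), mul_zero]
    have hexp : ∀ A : Finset (Fin k),
        sigPair (pwl (ctrl c (fun i => if i ∈ A then (1:ℝ) else 0))) p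
          = ∑ m ∈ p.coeff.support, p.coeff m *
              ∑ φ : Fin (FreeMonoid.toList m).length → Fin k,
                ((volume (Tset (FreeMonoid.toList m).length ∩ Box k φ)).toReal *
                  ∏ i : Fin (FreeMonoid.toList m).length,
                    ((k:ℝ) * if c (φ i) = (FreeMonoid.toList m).get i then 1 else 0)) *
                (if ∀ i, φ i ∈ A then 1 else 0) := by
      intro A
      rw [sigPair, Finsupp.sum]
      refine Finset.sum_congr rfl fun m _ => ?_
      rw [sig_pwl_ctrl hkpos c _ (FreeMonoid.toList m)]
      congr 1
      refine Finset.sum_congr rfl fun φ _ => ?_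
      rw [mul_assoc]
      congr 1
      calc (∏ i : Fin (FreeMonoid.toList m).length,
              ((k:ℝ) * if c (φ i) = (FreeMonoid.toList m).get i then
                (if φ i ∈ A then (1:ℝ) else 0) else 0))
          = ∏ i : Fin (FreeMonoid.toList m).length,
              (((k:ℝ) * if c (φ i) = (FreeMonoid.toList m).get i then 1 else 0) *
                (if φ i ∈ A then 1 else 0)) := by
            refine Finset.prod_congr rfl fun i _ => ?_
            by_cases h1 : c (φ i) = (FreeMonoid.toList m).get i <;>
              by_cases h2 : φ i ∈ A <;> simp [h1, h2]
        _ = _ := by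
            rw [Finset.prod_mul_distrib, Fintype.prod_boole]
            try rfl
            try (convert rfl using 3 <;> exact Subsingleton.elim _ _)
    have hG2 : ∑ A : Finset (Fin k), (-1:ℝ)^(k - A.card) *
        (∑ m ∈ p.coeff.support, p.coeff m *
          ∑ φ : Fin (FreeMonoid.toList m).length → Fin k,
            ((volume (Tset (FreeMonoid.toList m).length ∩ Box k φ)).toReal *
              ∏ i : Fin (FreeMonoid.toList m).length,
                ((k:ℝ) * if c (φ i) = (FreeMonoid.toList m).get i then 1 else 0)) *
            (if ∀ i, φ i ∈ A then 1 else 0)) = 0 :=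
      (Finset.sum_congr rfl fun A _ => by rw [hexp A]).trans hG
    have hswap : ∑ m ∈ p.coeff.support, p.coeff m *
        ∑ φ : Fin (FreeMonoid.toList m).length → Fin k,
          ((volume (Tset (FreeMonoid.toList m).length ∩ Box k φ)).toReal *
            ∏ i : Fin (FreeMonoid.toList m).length,
              ((k:ℝ) * if c (φ i) = (FreeMonoid.toList m).get i then 1 else 0)) *
          (if Function.Surjective φ then 1 else 0) = 0 := by
      refine Eq.trans ?_ hG2
      calc ∑ m ∈ p.coeff.support, p.coeff m *
          ∑ φ : Fin (FreeMonoid.toList m).length → Fin k,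
            ((volume (Tset (FreeMonoid.toList m).length ∩ Box k φ)).toReal *
              ∏ i : Fin (FreeMonoid.toList m).length,
                ((k:ℝ) * if c (φ i) = (FreeMonoid.toList m).get i then 1 else 0)) *
            (if Function.Surjective φ then 1 else 0)
          = ∑ m ∈ p.coeff.support, ∑ φ : Fin (FreeMonoid.toList m).length → Fin k,
              ∑ A : Finset (Fin k), p.coeff m *
                (((volume (Tset (FreeMonoid.toList m).length ∩ Box k φ)).toReal *
                  ∏ i : Fin (FreeMonoid.toList m).length,
                    ((k:ℝ) * if c (φ i) = (FreeMonoid.toList m).get i then 1 else 0)) *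
                ((-1:ℝ)^(k - A.card) * (if ∀ i, φ i ∈ A then 1 else 0))) := by
            refine Finset.sum_congr rfl fun m _ => ?_
            rw [Finset.mul_sum]
            refine Finset.sum_congr rfl fun φ _ => ?_
            rw [← sum_ie φ, Finset.mul_sum, Finset.mul_sum]
        _ = ∑ A : Finset (Fin k), ∑ m ∈ p.coeff.support,
              ∑ φ : Fin (FreeMonoid.toList m).length → Fin k, p.coeff m *
                (((volume (Tset (FreeMonoid.toList m).length ∩ Box k φ)).toReal *
                  ∏ i : Fin (FreeMonoid.toList m).length,
                    ((k:ℝ) * if c (φ i) = (FreeMonoid.toList m).get i then 1 else 0)) *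
                ((-1:ℝ)^(k - A.card) * (if ∀ i, φ i ∈ A then 1 else 0))) := by
            rw [Finset.sum_congr rfl fun m (_ : m ∈ p.coeff.support) => Finset.sum_comm]
            exact Finset.sum_comm
        _ = _ := by
            refine Finset.sum_congr rfl fun A _ => ?_
            rw [Finset.mul_sum]
            refine Finset.sum_congr rfl fun m _ => ?_
            rw [Finset.mul_sum, Finset.mul_sum]
            refine Finset.sum_congr rfl fun φ _ => ?_
            ring
    have hkey : ∀ m ∈ p.coeff.support,
        (∑ φ : Fin (FreeMonoid.toList m).length → Fin k,
          ((volume (Tset (FreeMonoid.toList m).length ∩ Box k φ)).toReal *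
            ∏ i : Fin (FreeMonoid.toList m).length,
              ((k:ℝ) * if c (φ i) = (FreeMonoid.toList m).get i then 1 else 0)) *
          (if Function.Surjective φ then 1 else 0))
        = if FreeMonoid.toList m = FreeMonoid.toList u then 1 else 0 :=
      fun m hm => key_term hkpos (FreeMonoid.toList u) (FreeMonoid.toList m) hu_len
        (hbound m hm) c hc
    rw [Finset.sum_congr rfl fun m hm => by rw [hkey m hm]] at hswap
    rw [Finset.sum_eq_single_of_mem u hu_mem (fun m _ hmne => by
      rw [if_neg (fun hEq => hmne (by
        have := congrArg FreeMonoid.ofList hEq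
        rwa [FreeMonoid.ofList_toList, FreeMonoid.ofList_toList] at this)), mul_zero])] at hswap
    rw [if_pos rfl, mul_one] at hswap
    exact (Finsupp.mem_support_iff.mp hu_mem) hswap
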